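/- Let Ω ⊂ ℂ² be a bounded domain containing the origin satisfying (S1) and (S2). Let w¹ = (w¹_1, w¹_2) and w² = (w²_1, w²_2) be pairs of functions Ω → ℂ smooth up to the boundary such that: (i) ∂w¹_1/∂z̄_2 = ∂w¹_2/∂z̄_1 and ∂w²_1/∂z̄_2 = ∂w²_2/∂z̄_1 on Ω; (ii) z_1 w¹_k + z_2 w²_k = 0 on Ω for k = 1, 2; (iii) there is ε > 0 such that all w¹_k, w²_k vanish on {z ∈ Ω : |z| < ε}. Then there exists a function H : Ω → ℂ smooth up to the boundary with w¹_k = −z_2 ∂H/∂z̄_k and w²_k = z_1 ∂H/∂z̄_k on Ω for k = 1, 2. -/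

import Mathlib

/-- The Wirtinger derivative `∂f/∂z̄₁` of `f : ℂ² → ℂ` at `z`:
`(1/2)(∂f/∂x₁ + i ∂f/∂y₁)`, computed from the real Fréchet derivative. -/
noncomputable def d1bar (f : ℂ × ℂ → ℂ) (z : ℂ × ℂ) : ℂ :=
  (1 / 2) * (fderiv ℝ f z (1, 0) + Complex.I * fderiv ℝ f z (Complex.I, 0))

/-- The Wirtinger derivative `∂f/∂z̄₂` of `f : ℂ² → ℂ` at `z`:
`(1/2)(∂f/∂x₂ + i ∂f/∂y₂)`, computed from the real Fréchet derivative. -/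
noncomputable def d2bar (f : ℂ × ℂ → ℂ) (z : ℂ × ℂ) : ℂ :=
  (1 / 2) * (fderiv ℝ f z (0, 1) + Complex.I * fderiv ℝ f z (0, Complex.I))

/-- `f` is smooth up to the boundary of `Ω`: it agrees on `Ω` with a function that is
smooth on an open neighborhood of the closure of `Ω`. -/
def SmoothUpToBdry (Ω : Set (ℂ × ℂ)) (f : ℂ × ℂ → ℂ) : Prop :=
  ∃ (U : Set (ℂ × ℂ)) (F : ℂ × ℂ → ℂ), IsOpen U ∧ closure Ω ⊆ U ∧
    ContDiffOn ℝ (⊤ : ℕ∞) F U ∧ ∀ z ∈ Ω, f z = F z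

/-- Hypothesis (S1): every `∂̄`-closed `(0,1)`-form on `Ω` with coefficients smooth up to
the boundary is `∂̄u` for a function `u` smooth up to the boundary. -/
def S1 (Ω : Set (ℂ × ℂ)) : Prop :=
  ∀ β₁ β₂ : ℂ × ℂ → ℂ, SmoothUpToBdry Ω β₁ → SmoothUpToBdry Ω β₂ →
    (∀ z ∈ Ω, d2bar β₁ z = d1bar β₂ z) →
    ∃ u : ℂ × ℂ → ℂ, SmoothUpToBdry Ω u ∧
      (∀ z ∈ Ω, d1bar u z = β₁ z) ∧ (∀ z ∈ Ω, d2bar u z = β₂ z)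

/-- Hypothesis (S2): every `(0,2)`-form on `Ω` with coefficient smooth up to the boundary
is `∂̄` of a `(0,1)`-form with coefficients smooth up to the boundary. -/
def S2 (Ω : Set (ℂ × ℂ)) : Prop :=
  ∀ β : ℂ × ℂ → ℂ, SmoothUpToBdry Ω β →
    ∃ u₁ u₂ : ℂ × ℂ → ℂ, SmoothUpToBdry Ω u₁ ∧ SmoothUpToBdry Ω u₂ ∧
      ∀ z ∈ Ω, d1bar u₂ z - d2bar u₁ z = β z

open Complex Filter

section KoszulAux

lemma dbar_congr₁ {f g : ℂ × ℂ → ℂ} {z : ℂ × ℂ} (h : f =ᶠ[nhds z] g) :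
    d1bar f z = d1bar g z := by rw [d1bar, d1bar, h.fderiv_eq]

lemma dbar_congr₂ {f g : ℂ × ℂ → ℂ} {z : ℂ × ℂ} (h : f =ᶠ[nhds z] g) :
    d2bar f z = d2bar g z := by rw [d2bar, d2bar, h.fderiv_eq]

lemma d1bar_zero (z : ℂ × ℂ) : d1bar (fun _ => (0:ℂ)) z = 0 := by simp [d1bar]

lemma d2bar_zero (z : ℂ × ℂ) : d2bar (fun _ => (0:ℂ)) z = 0 := by simp [d2bar]

lemma d1bar_of_cdiff {f : ℂ × ℂ → ℂ} {z : ℂ × ℂ} (h : DifferentiableAt ℂ f z) :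
    d1bar f z = 0 := by
  rw [d1bar, h.fderiv_restrictScalars ℝ]
  have h2 : ((Complex.I : ℂ), (0:ℂ)) = Complex.I • ((1:ℂ), (0:ℂ)) := by simp
  rw [h2]
  simp only [ContinuousLinearMap.coe_restrictScalars', map_smul, smul_eq_mul]
  linear_combination ((fderiv ℂ f z) (1, 0) / 2) * Complex.I_mul_I

lemma d2bar_of_cdiff {f : ℂ × ℂ → ℂ} {z : ℂ × ℂ} (h : DifferentiableAt ℂ f z) :
    d2bar f z = 0 := by
  rw [d2bar, h.fderiv_restrictScalars ℝ]
  have h2 : ((0:ℂ), (Complex.I : ℂ)) = Complex.I • ((0:ℂ), (1:ℂ)) := by simp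
  rw [h2]
  simp only [ContinuousLinearMap.coe_restrictScalars', map_smul, smul_eq_mul]
  linear_combination ((fderiv ℂ f z) (0, 1) / 2) * Complex.I_mul_I

lemma d1bar_mul {f g : ℂ × ℂ → ℂ} {z : ℂ × ℂ} (hf : DifferentiableAt ℝ f z)
    (hg : DifferentiableAt ℝ g z) :
    d1bar (fun w => f w * g w) z = d1bar f z * g z + f z * d1bar g z := by
  rw [d1bar, d1bar, d1bar, fderiv_fun_mul hf hg]
  simp only [ContinuousLinearMap.add_apply, ContinuousLinearMap.smul_apply, smul_eq_mul]
  ring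

lemma d2bar_mul {f g : ℂ × ℂ → ℂ} {z : ℂ × ℂ} (hf : DifferentiableAt ℝ f z)
    (hg : DifferentiableAt ℝ g z) :
    d2bar (fun w => f w * g w) z = d2bar f z * g z + f z * d2bar g z := by
  rw [d2bar, d2bar, d2bar, fderiv_fun_mul hf hg]
  simp only [ContinuousLinearMap.add_apply, ContinuousLinearMap.smul_apply, smul_eq_mul]
  ring

lemma d1bar_neg (f : ℂ × ℂ → ℂ) (z : ℂ × ℂ) : d1bar (fun w => -f w) z = -d1bar f z := by
  rw [d1bar, d1bar, fderiv_fun_neg]; simp; ring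

lemma d2bar_neg (f : ℂ × ℂ → ℂ) (z : ℂ × ℂ) : d2bar (fun w => -f w) z = -d2bar f z := by
  rw [d2bar, d2bar, fderiv_fun_neg]; simp; ring

lemma contDiff_normSq2 :
    ContDiff ℝ (⊤:ℕ∞) (fun z : ℂ × ℂ => Complex.normSq z.1 + Complex.normSq z.2) := by
  have h1 : ContDiff ℝ (⊤:ℕ∞) (fun w : ℂ => Complex.normSq w) := by
    have : (fun w : ℂ => Complex.normSq w) = fun w : ℂ => w.re * w.re + w.im * w.im :=
      funext fun w => by simp [Complex.normSq_apply]
    rw [this]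
    exact (Complex.reCLM.contDiff.mul Complex.reCLM.contDiff).add
      (Complex.imCLM.contDiff.mul Complex.imCLM.contDiff)
  exact (h1.comp contDiff_fst).add (h1.comp contDiff_snd)

lemma contDiff_conj_fst : ContDiff ℝ (⊤:ℕ∞) (fun z : ℂ × ℂ => (starRingEnd ℂ) z.1) :=
  Complex.conjCLE.contDiff.comp contDiff_fst

lemma contDiff_conj_snd : ContDiff ℝ (⊤:ℕ∞) (fun z : ℂ × ℂ => (starRingEnd ℂ) z.2) :=
  Complex.conjCLE.contDiff.comp contDiff_snd

/-- The Koszul division function: where the relation `z₁ a + z₂ b = 0` holds and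
`(a, b)` vanishes near the origin, this equals `b/z₁ = -a/z₂`. -/
noncomputable def gAux (a b : ℂ × ℂ → ℂ) (z : ℂ × ℂ) : ℂ :=
  ((starRingEnd ℂ) z.1 * b z - (starRingEnd ℂ) z.2 * a z) /
    ((Complex.normSq z.1 + Complex.normSq z.2 : ℝ) : ℂ)

lemma smoothUpToBdry_quot {Ω : Set (ℂ × ℂ)} {ε : ℝ} (hε : 0 < ε) {a b : ℂ × ℂ → ℂ}
    (ha : SmoothUpToBdry Ω a) (hb : SmoothUpToBdry Ω b)
    (hvan : ∀ z ∈ Ω, Complex.normSq z.1 + Complex.normSq z.2 < ε ^ 2 → a z = 0 ∧ b z = 0) :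
    SmoothUpToBdry Ω (gAux a b) := by
  obtain ⟨Ua, Fa, hUa, hca, hFa, heqa⟩ := ha
  obtain ⟨Ub, Fb, hUb, hcb, hFb, heqb⟩ := hb
  refine ⟨Ua ∩ Ub, fun z =>
      (Real.smoothTransition ((Complex.normSq z.1 + Complex.normSq z.2) / (ε ^ 2 / 2) - 1) *
        (Complex.normSq z.1 + Complex.normSq z.2)⁻¹) •
      ((starRingEnd ℂ) z.1 * Fb z - (starRingEnd ℂ) z.2 * Fa z),
    hUa.inter hUb, Set.subset_inter hca hcb, ?_, ?_⟩
  · intro x hx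
    by_cases hxD : (Complex.normSq x.1 + Complex.normSq x.2) < ε ^ 2 / 2
    · have hO : IsOpen {z : ℂ × ℂ | (Complex.normSq z.1 + Complex.normSq z.2) < ε ^ 2 / 2} :=
        isOpen_lt contDiff_normSq2.continuous continuous_const
      have hev : (fun z =>
          (Real.smoothTransition ((Complex.normSq z.1 + Complex.normSq z.2) / (ε ^ 2 / 2) - 1) *
            (Complex.normSq z.1 + Complex.normSq z.2)⁻¹) •
          ((starRingEnd ℂ) z.1 * Fb z - (starRingEnd ℂ) z.2 * Fa z))
          =ᶠ[nhds x] fun _ => (0 : ℂ) := by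
        refine eventuallyEq_of_mem (hO.mem_nhds hxD) fun z hz => ?_
        have : Real.smoothTransition
            ((Complex.normSq z.1 + Complex.normSq z.2) / (ε ^ 2 / 2) - 1) = 0 := by
          apply Real.smoothTransition.zero_of_nonpos
          have h2 : (0:ℝ) < ε ^ 2 / 2 := by positivity
          rw [sub_nonpos, div_le_one h2]
          exact le_of_lt hz
        simp [this]
      exact (contDiffAt_const.congr_of_eventuallyEq hev).contDiffWithinAt
    · have hDpos : 0 < (Complex.normSq x.1 + Complex.normSq x.2) :=
        lt_of_lt_of_le (by positivity) (not_lt.1 hxD)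
      have hθ : ContDiffAt ℝ (⊤:ℕ∞) (fun z =>
          Real.smoothTransition
            ((Complex.normSq z.1 + Complex.normSq z.2) / (ε ^ 2 / 2) - 1)) x :=
        (Real.smoothTransition.contDiff.comp
          ((contDiff_normSq2.div_const _).sub contDiff_const)).contDiffAt
      have hnum : ContDiffAt ℝ (⊤:ℕ∞)
          (fun z => (starRingEnd ℂ) z.1 * Fb z - (starRingEnd ℂ) z.2 * Fa z) x :=
        (contDiff_conj_fst.contDiffAt.mul (hFb.contDiffAt (hUb.mem_nhds hx.2))).sub
          (contDiff_conj_snd.contDiffAt.mul (hFa.contDiffAt (hUa.mem_nhds hx.1)))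
      have hinv : ContDiffAt ℝ (⊤:ℕ∞)
          (fun z : ℂ × ℂ => (Complex.normSq z.1 + Complex.normSq z.2)⁻¹) x :=
        contDiff_normSq2.contDiffAt.inv hDpos.ne'
      exact ((hθ.mul hinv).smul hnum).contDiffWithinAt
  · intro z hz
    dsimp only
    by_cases hlt : (Complex.normSq z.1 + Complex.normSq z.2) < ε ^ 2
    · obtain ⟨ha0, hb0⟩ := hvan z hz hlt
      simp only [gAux, ← heqa z hz, ← heqb z hz, ha0, hb0, mul_zero, sub_zero, zero_sub,
        neg_zero, zero_div, smul_zero]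
    · have hθ1 : Real.smoothTransition
          ((Complex.normSq z.1 + Complex.normSq z.2) / (ε ^ 2 / 2) - 1) = 1 := by
        apply Real.smoothTransition.one_of_one_le
        have h2 : (0:ℝ) < ε ^ 2 / 2 := by positivity
        rw [le_sub_iff_add_le, le_div_iff₀ h2]
        have := not_lt.1 hlt
        linarith
      rw [gAux, hθ1, one_mul, ← heqa z hz, ← heqb z hz, Complex.real_smul, Complex.ofReal_inv]
      ring

lemma gAux_spec {a b : ℂ × ℂ → ℂ} {z : ℂ × ℂ}
    (htau : z.1 * a z + z.2 * b z = 0) (ha0 : z = 0 → a z = 0) (hb0 : z = 0 → b z = 0) :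
    a z = -z.2 * gAux a b z ∧ b z = z.1 * gAux a b z := by
  by_cases h0 : z = 0
  · rw [ha0 h0, hb0 h0, gAux, ha0 h0, hb0 h0, h0]
    simp
  · have hz : z.1 ≠ 0 ∨ z.2 ≠ 0 := by
      by_contra h
      push_neg at h
      exact h0 (Prod.ext h.1 h.2)
    have hD : (0:ℝ) < Complex.normSq z.1 + Complex.normSq z.2 := by
      rcases hz with h | h
      · have h1 := Complex.normSq_pos.2 h
        have h2 := Complex.normSq_nonneg z.2
        linarith
      · have h1 := Complex.normSq_pos.2 h
        have h2 := Complex.normSq_nonneg z.1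
        linarith
    have hDc : ((Complex.normSq z.1 + Complex.normSq z.2 : ℝ) : ℂ) ≠ 0 :=
      Complex.ofReal_ne_zero.2 hD.ne'
    rw [Complex.ofReal_add] at hDc
    constructor
    · rw [gAux, Complex.ofReal_add, eq_comm, ← mul_div_assoc, div_eq_iff hDc,
        ← Complex.mul_conj, ← Complex.mul_conj]
      linear_combination (-(starRingEnd ℂ) z.1) * htau
    · rw [gAux, Complex.ofReal_add, eq_comm, ← mul_div_assoc, div_eq_iff hDc,
        ← Complex.mul_conj, ← Complex.mul_conj]
      linear_combination (-(starRingEnd ℂ) z.2) * htau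

lemma SmoothUpToBdry.diffAt {Ω : Set (ℂ × ℂ)} {f : ℂ × ℂ → ℂ} (hopen : IsOpen Ω)
    (h : SmoothUpToBdry Ω f) {z : ℂ × ℂ} (hz : z ∈ Ω) : DifferentiableAt ℝ f z := by
  obtain ⟨U, F, hU, hcl, hF, heq⟩ := h
  have hzU : z ∈ U := hcl (subset_closure hz)
  have hFd : DifferentiableAt ℝ F z := (hF.contDiffAt (hU.mem_nhds hzU)).differentiableAt (by simp)
  exact hFd.congr_of_eventuallyEq (eventuallyEq_of_mem (hopen.mem_nhds hz) heq)

end KoszulAux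

/-- The `∂̄`-Koszul complex proposition in `ℂ²` (case `r = 1`, `s = 1`, `F = (z₁, z₂)`),
for data smooth up to the boundary. -/
theorem koszul_dim_two_smooth_up_to_boundary (Ω : Set (ℂ × ℂ))
    (hopen : IsOpen Ω) (hconn : IsConnected Ω) (hbdd : Bornology.IsBounded Ω)
    (h0 : (0, 0) ∈ Ω) (h1 : S1 Ω) (h2 : S2 Ω)
    (w1 w2 : Fin 2 → ℂ × ℂ → ℂ)
    (hw1sm : ∀ k, SmoothUpToBdry Ω (w1 k)) (hw2sm : ∀ k, SmoothUpToBdry Ω (w2 k))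
    (hw1cl : ∀ z ∈ Ω, d2bar (w1 0) z = d1bar (w1 1) z)
    (hw2cl : ∀ z ∈ Ω, d2bar (w2 0) z = d1bar (w2 1) z)
    (htau : ∀ k, ∀ z ∈ Ω, z.1 * w1 k z + z.2 * w2 k z = 0)
    (hsupp : ∃ ε > 0, ∀ k, ∀ z ∈ Ω, ‖z.1‖ ^ 2 + ‖z.2‖ ^ 2 < ε ^ 2 →
      w1 k z = 0 ∧ w2 k z = 0) :
    ∃ H : ℂ × ℂ → ℂ, SmoothUpToBdry Ω H ∧
      (∀ z ∈ Ω, w1 0 z = -z.2 * d1bar H z) ∧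
      (∀ z ∈ Ω, w1 1 z = -z.2 * d2bar H z) ∧
      (∀ z ∈ Ω, w2 0 z = z.1 * d1bar H z) ∧
      (∀ z ∈ Ω, w2 1 z = z.1 * d2bar H z) := by
  obtain ⟨ε, hε, hsup⟩ := hsupp
  have hnorm : ∀ c : ℂ, ‖c‖ ^ 2 = Complex.normSq c := fun c => by
    rw [Complex.sq_norm]
  have hvan : ∀ k, ∀ z ∈ Ω, Complex.normSq z.1 + Complex.normSq z.2 < ε ^ 2 →
      w1 k z = 0 ∧ w2 k z = 0 := fun k z hz h =>
    hsup k z hz (by rw [hnorm, hnorm]; exact h)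
  have hdiff1 : ∀ k, ∀ z ∈ Ω, DifferentiableAt ℝ (w1 k) z :=
    fun k z hz => (hw1sm k).diffAt hopen hz
  have hdiff2 : ∀ k, ∀ z ∈ Ω, DifferentiableAt ℝ (w2 k) z :=
    fun k z hz => (hw2sm k).diffAt hopen hz
  have hkey : ∀ k, ∀ z ∈ Ω, w1 k z = -z.2 * gAux (w1 k) (w2 k) z ∧
      w2 k z = z.1 * gAux (w1 k) (w2 k) z := by
    intro k z hz
    refine gAux_spec (htau k z hz) (fun hz0 => ?_) (fun hz0 => ?_)
    · refine (hvan k z hz ?_).1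
      rw [hz0]
      simpa using (by positivity : (0:ℝ) < ε ^ 2)
    · refine (hvan k z hz ?_).2
      rw [hz0]
      simpa using (by positivity : (0:ℝ) < ε ^ 2)
  have hcl : ∀ z ∈ Ω, d2bar (gAux (w1 0) (w2 0)) z = d1bar (gAux (w1 1) (w2 1)) z := by
    intro z hz
    by_cases hz1 : z.1 ≠ 0
    · have hO : IsOpen (Ω ∩ {w : ℂ × ℂ | w.1 ≠ 0}) :=
        hopen.inter (isOpen_compl_singleton.preimage continuous_fst)
      have hev : ∀ k, (gAux (w1 k) (w2 k)) =ᶠ[nhds z] fun w => w2 k w * (w.1)⁻¹ := by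
        intro k
        refine eventuallyEq_of_mem (hO.mem_nhds ⟨hz, hz1⟩) fun w hw => ?_
        have h2 := (hkey k w hw.1).2
        rw [h2, mul_comm w.1, mul_assoc, mul_inv_cancel₀ hw.2, mul_one]
      have hinv : DifferentiableAt ℂ (fun w : ℂ × ℂ => (w.1)⁻¹) z :=
        (differentiableAt_fst).inv hz1
      rw [dbar_congr₂ (hev 0), dbar_congr₁ (hev 1),
        d2bar_mul (hdiff2 0 z hz) (hinv.restrictScalars ℝ),
        d1bar_mul (hdiff2 1 z hz) (hinv.restrictScalars ℝ),
        d1bar_of_cdiff hinv, d2bar_of_cdiff hinv, hw2cl z hz]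
      ring
    · by_cases hz2 : z.2 ≠ 0
      · have hO : IsOpen (Ω ∩ {w : ℂ × ℂ | w.2 ≠ 0}) :=
          hopen.inter (isOpen_compl_singleton.preimage continuous_snd)
        have hev : ∀ k, (gAux (w1 k) (w2 k)) =ᶠ[nhds z] fun w => -w1 k w * (w.2)⁻¹ := by
          intro k
          refine eventuallyEq_of_mem (hO.mem_nhds ⟨hz, hz2⟩) fun w hw => ?_
          have h2 := (hkey k w hw.1).1
          rw [h2]
          linear_combination (-(gAux (w1 k) (w2 k) w)) * mul_inv_cancel₀ (hw.2 : w.2 ≠ 0)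
        have hinv : DifferentiableAt ℂ (fun w : ℂ × ℂ => (w.2)⁻¹) z :=
          (differentiableAt_snd).inv hz2
        rw [dbar_congr₂ (hev 0), dbar_congr₁ (hev 1),
          d2bar_mul ((hdiff1 0 z hz).fun_neg) (hinv.restrictScalars ℝ),
          d1bar_mul ((hdiff1 1 z hz).fun_neg) (hinv.restrictScalars ℝ),
          d1bar_of_cdiff hinv, d2bar_of_cdiff hinv, d2bar_neg, d1bar_neg, hw1cl z hz]
        ring
      · push_neg at hz1 hz2
        have hO : IsOpen (Ω ∩ {w : ℂ × ℂ | Complex.normSq w.1 + Complex.normSq w.2 < ε ^ 2}) :=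
          hopen.inter (isOpen_lt contDiff_normSq2.continuous continuous_const)
        have hmem : z ∈ Ω ∩ {w : ℂ × ℂ | Complex.normSq w.1 + Complex.normSq w.2 < ε ^ 2} := by
          refine ⟨hz, ?_⟩
          show Complex.normSq z.1 + Complex.normSq z.2 < ε ^ 2
          rw [hz1, hz2]
          simpa using (by positivity : (0:ℝ) < ε ^ 2)
        have hev : ∀ k, gAux (w1 k) (w2 k) =ᶠ[nhds z] fun _ => (0:ℂ) := by
          intro k
          refine eventuallyEq_of_mem (hO.mem_nhds hmem) fun w hw => ?_
          obtain ⟨ha, hb⟩ := hvan k w hw.1 hw.2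
          simp [gAux, ha, hb]
        rw [dbar_congr₂ (hev 0), dbar_congr₁ (hev 1), d1bar_zero, d2bar_zero]
  have hsm : ∀ k, SmoothUpToBdry Ω (gAux (w1 k) (w2 k)) := fun k =>
    smoothUpToBdry_quot hε (hw1sm k) (hw2sm k) (hvan k)
  obtain ⟨H, hHsm, hH1, hH2⟩ := h1 _ _ (hsm 0) (hsm 1) hcl
  refine ⟨H, hHsm, fun z hz => ?_, fun z hz => ?_, fun z hz => ?_, fun z hz => ?_⟩
  · rw [hH1 z hz]; exact (hkey 0 z hz).1
  · rw [hH2 z hz]; exact (hkey 1 z hz).1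
  · rw [hH1 z hz]; exact (hkey 0 z hz).2
  · rw [hH2 z hz]; exact (hkey 1 z hz).2
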